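/- Let λ₁ ≥ λ₂ ≥ ... ≥ λ_n ≥ 0 and μ₁ ≥ μ₂ ≥ ... ≥ μ_n ≥ 0 be two sorted sequences of nonnegative reals, and let π be any permutation of {1,...,n}. Then ∑_{i=1}^n min(λ_i, μ_i) ≥ ∑_{i=1}^n min(λ_i, μ_{π(i)}). -/

import Mathlib

open Finset Equiv

lemma min_exchange (a b c d : ℝ) (hab : b ≤ a) (hcd : d ≤ c) :
    min a d + min b c ≤ min a c + min b d := by
  rcases le_total b d with h | h
  · have h1 : min b d = b := min_eq_left h
    have h2 : min b c ≤ b := min_le_left _ _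
    have h3 : min a d ≤ min a c := min_le_min le_rfl hcd
    linarith
  · have h1 : min b d = d := min_eq_right h
    have h2 : min a d = d := min_eq_right (h.trans hab)
    have h3 : min b c ≤ min a c := min_le_min hab le_rfl
    linarith

lemma aux_stmt : ∀ (n : ℕ) (lam mu : Fin n → ℝ), Antitone lam → Antitone mu →
    ∀ σ : Equiv.Perm (Fin n),
    ∑ i, min (lam i) (mu (σ i)) ≤ ∑ i, min (lam i) (mu i) := by
  intro n
  induction n with
  | zero => intro lam mu _ _ σ; simp
  | succ n ih =>
    intro lam mu hlam hmu σ
    set j : Fin (n + 1) := σ 0 with hj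
    set σ' : Equiv.Perm (Fin (n + 1)) := σ.trans (Equiv.swap j 0) with hσ'
    have hσ'0 : σ' 0 = 0 := by simp [hσ', ← hj]
    -- step 1 : ∑ min(lam i, mu (σ i)) ≤ ∑ min(lam i, mu (σ' i))
    have step1 : ∑ i, min (lam i) (mu (σ i)) ≤ ∑ i, min (lam i) (mu (σ' i)) := by
      by_cases hj0 : j = 0
      · have : σ' = σ := by
          simp [hσ', hj0, Equiv.swap_self]
        rw [this]
      · set k : Fin (n + 1) := σ.symm 0 with hk
        have hk0 : k ≠ 0 := by
          intro h
          have hσk0 : σ k = 0 := Equiv.apply_symm_apply σ 0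
          rw [h] at hσk0
          exact hj0 (hj.trans hσk0)
        have hσk : σ k = 0 := by rw [hk, Equiv.apply_symm_apply]
        have hσ'k : σ' k = j := by simp [hσ', hσk]
        have hσ'0' : σ' 0 = 0 := hσ'0
        have hsub : ({0, k} : Finset (Fin (n + 1))) ⊆ univ := subset_univ _
        have key : ∀ g : Fin (n + 1) → ℝ,
            ∑ i, g i = (∑ i ∈ univ \ {0, k}, g i) + (g 0 + g k) := by
          intro g
          rw [← Finset.sum_pair (Ne.symm hk0), Finset.sum_sdiff hsub]
        rw [key (fun i => min (lam i) (mu (σ i))), key (fun i => min (lam i) (mu (σ' i)))]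
        have hrest : ∑ i ∈ univ \ {0, k}, min (lam i) (mu (σ i)) =
            ∑ i ∈ univ \ {0, k}, min (lam i) (mu (σ' i)) := by
          apply Finset.sum_congr rfl
          intro i hi
          simp only [mem_sdiff, mem_insert, mem_singleton, not_or] at hi
          have h1 : σ i ≠ j := fun h => hi.2.1 (σ.injective (h.trans hj))
          have h2 : σ i ≠ 0 := fun h => hi.2.2 (by rw [hk, ← h, Equiv.symm_apply_apply])
          have : σ' i = σ i := by
            simp [hσ', Equiv.swap_apply_of_ne_of_ne h1 h2]
          rw [this]
        rw [hrest]
        have hexch : min (lam 0) (mu j) + min (lam k) (mu 0) ≤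
            min (lam 0) (mu 0) + min (lam k) (mu j) := by
          have h1 : lam k ≤ lam 0 := hlam (Fin.zero_le k)
          have h2 : mu j ≤ mu 0 := hmu (Fin.zero_le j)
          have := min_exchange (lam 0) (lam k) (mu 0) (mu j) h1 h2
          linarith
        simp only [← hj, hσk, hσ'0, hσ'k]
        linarith
    -- step 2 : σ' fixes 0, so decompose and apply IH
    refine step1.trans ?_
    set pr := Equiv.Perm.decomposeFin σ' with hpr
    have hσ'eq : σ' = Equiv.Perm.decomposeFin.symm pr := by
      rw [hpr, Equiv.symm_apply_apply]
    have hp0 : pr.1 = 0 := by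
      rw [← hσ'0, hσ'eq, ← Prod.mk.eta (p := pr), Equiv.Perm.decomposeFin_symm_apply_zero]
    have hsucc : ∀ x : Fin n, σ' x.succ = (pr.2 x).succ := by
      intro x
      rw [hσ'eq, ← Prod.mk.eta (p := pr), Equiv.Perm.decomposeFin_symm_apply_succ, hp0,
        Equiv.swap_self]
      rfl
    rw [Fin.sum_univ_succ, Fin.sum_univ_succ, hσ'0]
    refine add_le_add le_rfl ?_
    calc ∑ i : Fin n, min (lam i.succ) (mu (σ' i.succ))
        = ∑ i : Fin n, min ((lam ∘ Fin.succ) i) ((mu ∘ Fin.succ) (pr.2 i)) := by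
          apply Finset.sum_congr rfl
          intro i _
          rw [hsucc]
          rfl
      _ ≤ ∑ i : Fin n, min ((lam ∘ Fin.succ) i) ((mu ∘ Fin.succ) i) :=
          ih (lam ∘ Fin.succ) (mu ∘ Fin.succ)
            (hlam.comp_monotone (Fin.strictMono_succ.monotone))
            (hmu.comp_monotone (Fin.strictMono_succ.monotone)) pr.2
      _ = ∑ i : Fin n, min (lam i.succ) (mu i.succ) := rfl

theorem stmt_4 (n : ℕ) (lam mu : Fin n → ℝ)
    (hlam_sorted : Antitone lam) (hmu_sorted : Antitone mu)
    (hlam_nonneg : ∀ i, 0 ≤ lam i) (hmu_nonneg : ∀ i, 0 ≤ mu i)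
    (π : Equiv.Perm (Fin n)) :
    ∑ i, min (lam i) (mu (π i)) ≤ ∑ i, min (lam i) (mu i) :=
  aux_stmt n lam mu hlam_sorted hmu_sorted π
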